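/- Let 0 < α ≤ 1, K > 0, η > 0, j₀ ∈ ℕ, and let f ∈ Σ(α,K) be self-similar in the sense that for every j ≥ j₀, sup_{x ∈ [0,1)} |f(x) − 2^j ∫_{I_{j,⌊2^j x⌋}} f(t) dt| ≥ η 2^{−jα}. Then there exists a constant C > 0, depending only on α, K and η, such that for every j ≥ j₀, sup over all pairs (l,k) with l ≥ j and 0 ≤ k < 2^l of |∫₀¹ f ψ_{l,k}| ≥ C * 2^{−j(α + 1/2)}. -/

import Mathlib

open MeasureTheory

/-- The dyadic interval `I_{l,k} = [k 2^{-l}, (k+1) 2^{-l})`. -/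
def dyadicI (l k : ℕ) : Set ℝ := Set.Ico ((k : ℝ) / 2 ^ l) (((k : ℝ) + 1) / 2 ^ l)

/-- The Haar wavelet `ψ_{l,k}(x) = 2^{l/2} (1_{[1/2,1)} - 1_{[0,1/2)})(2^l x - k)`. -/
noncomputable def haar (l k : ℕ) (x : ℝ) : ℝ :=
  2 ^ ((l : ℝ) / 2) *
    ((Set.Ico (1 / 2 : ℝ) 1).indicator 1 (2 ^ l * x - k) -
     (Set.Ico (0 : ℝ) (1 / 2 : ℝ)).indicator 1 (2 ^ l * x - k))


lemma dyadicI_subset {l k : ℕ} (hk : k < 2 ^ l) : dyadicI l k ⊆ Set.Ico (0:ℝ) 1 := by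
  rintro x ⟨h1, h2⟩
  have hp : (0:ℝ) < 2 ^ l := by positivity
  refine ⟨le_trans (by positivity) h1, ?_⟩
  have hk' : (k:ℝ) + 1 ≤ 2 ^ l := by exact_mod_cast hk
  calc x < ((k:ℝ)+1)/2^l := h2
    _ ≤ 1 := by rw [div_le_one hp]; exact hk'

lemma measurableSet_dyadicI (l k : ℕ) : MeasurableSet (dyadicI l k) := measurableSet_Ico

lemma volume_dyadicI (l k : ℕ) : volume (dyadicI l k) = ENNReal.ofReal (((2:ℝ)^l)⁻¹) := by
  rw [dyadicI, Real.volume_Ico]; congr 1; field_simp; ring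

lemma volume_dyadicI_lt_top (l k : ℕ) : volume (dyadicI l k) < ⊤ := by
  rw [volume_dyadicI]; exact ENNReal.ofReal_lt_top

lemma volume_dyadicI_toReal (l k : ℕ) : (volume (dyadicI l k)).toReal = ((2:ℝ)^l)⁻¹ := by
  rw [volume_dyadicI, ENNReal.toReal_ofReal (by positivity)]

lemma mem_dyadicI_floor (l : ℕ) {x : ℝ} (hx : 0 ≤ x) : x ∈ dyadicI l ⌊2 ^ l * x⌋₊ := by
  have hp : (0:ℝ) < 2 ^ l := by positivity
  have h0 : (0:ℝ) ≤ 2 ^ l * x := by positivity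
  constructor
  · rw [div_le_iff₀ hp]
    have := Nat.floor_le h0
    linarith
  · rw [lt_div_iff₀ hp]
    have := Nat.lt_floor_add_one (2 ^ l * x)
    linarith

lemma floor_lt_pow {l : ℕ} {x : ℝ} (hx : x ∈ Set.Ico (0:ℝ) 1) : ⌊2 ^ l * x⌋₊ < 2 ^ l := by
  have hp : (0:ℝ) < 2 ^ l := by positivity
  rw [Nat.floor_lt (mul_nonneg (by positivity) hx.1)]
  push_cast
  nlinarith [hx.1, hx.2]

lemma dist_le_of_mem_dyadicI {l k : ℕ} {x y : ℝ} (hx : x ∈ dyadicI l k) (hy : y ∈ dyadicI l k) :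
    |x - y| ≤ ((2:ℝ)^l)⁻¹ := by
  obtain ⟨hx1, hx2⟩ := hx; obtain ⟨hy1, hy2⟩ := hy
  have hp : (0:ℝ) < 2 ^ l := by positivity
  have h : ((k:ℝ)+1)/2^l - (k:ℝ)/2^l = ((2:ℝ)^l)⁻¹ := by field_simp; ring
  rw [abs_sub_le_iff]
  constructor <;> linarith

section
variable {α K : ℝ} {f : ℝ → ℝ}

lemma holder_continuousOn (hα : 0 < α) (hK : 0 < K)
    (Hf : ∀ x ∈ Set.Ico (0:ℝ) 1, ∀ y ∈ Set.Ico (0:ℝ) 1, |f x - f y| ≤ K * |x - y| ^ α) :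
    ContinuousOn f (Set.Ico (0:ℝ) 1) := by
  intro x hx
  rw [ContinuousWithinAt, Metric.tendsto_nhdsWithin_nhds]
  intro ε hε
  refine ⟨(ε / (2 * K)) ^ α⁻¹, Real.rpow_pos_of_pos (by positivity) _, ?_⟩
  intro y hy hd
  have h1 : |y - x| ^ α ≤ ((ε / (2 * K)) ^ α⁻¹) ^ α := by
    apply Real.rpow_le_rpow (abs_nonneg _) _ hα.le
    rw [Real.dist_eq] at hd
    exact hd.le
  rw [Real.rpow_inv_rpow (by positivity) hα.ne'] at h1
  have h2 : |f y - f x| ≤ K * |y - x| ^ α := Hf y hy x hx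
  have h3 : K * |y - x| ^ α ≤ K * (ε / (2 * K)) := by
    exact mul_le_mul_of_nonneg_left h1 hK.le
  rw [Real.dist_eq]
  calc |f y - f x| ≤ K * (ε / (2 * K)) := le_trans h2 h3
    _ = ε / 2 := by field_simp
    _ < ε := by linarith

lemma holder_bounded (hα : 0 < α) (hK : 0 < K)
    (Hf : ∀ x ∈ Set.Ico (0:ℝ) 1, ∀ y ∈ Set.Ico (0:ℝ) 1, |f x - f y| ≤ K * |x - y| ^ α)
    {x : ℝ} (hx : x ∈ Set.Ico (0:ℝ) 1) : |f x| ≤ |f 0| + K := by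
  have h0 : (0:ℝ) ∈ Set.Ico (0:ℝ) 1 := by constructor <;> norm_num
  have h1 : |f x - f 0| ≤ K * |x - 0| ^ α := Hf x hx 0 h0
  have h2 : |x - 0| ^ α ≤ 1 := by
    apply Real.rpow_le_one (abs_nonneg _) _ hα.le
    rw [sub_zero, abs_of_nonneg hx.1]
    exact hx.2.le
  have h3 : K * |x - 0| ^ α ≤ K := by nlinarith
  calc |f x| = |f 0 + (f x - f 0)| := by ring_nf
    _ ≤ |f 0| + |f x - f 0| := abs_add_le _ _
    _ ≤ |f 0| + K := by linarith

lemma holder_integrableOn (hα : 0 < α) (hK : 0 < K)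
    (Hf : ∀ x ∈ Set.Ico (0:ℝ) 1, ∀ y ∈ Set.Ico (0:ℝ) 1, |f x - f y| ≤ K * |x - y| ^ α) :
    IntegrableOn f (Set.Ico (0:ℝ) 1) := by
  have hm : AEStronglyMeasurable f (volume.restrict (Set.Ico (0:ℝ) 1)) :=
    (holder_continuousOn hα hK Hf).aestronglyMeasurable measurableSet_Ico
  refine ⟨hm, ?_⟩
  apply MeasureTheory.HasFiniteIntegral.restrict_of_bounded (C := |f 0| + K)
    (by rw [Real.volume_Ico]; exact ENNReal.ofReal_lt_top)
  exact (ae_restrict_iff' measurableSet_Ico).2 (Filter.Eventually.of_forall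
    fun x hx => by simpa using holder_bounded hα hK Hf hx)

end

section
variable {f : ℝ → ℝ}

lemma haar_mul_eq (l k : ℕ) (t : ℝ) :
    f t * haar l k t = 2 ^ ((l : ℝ) / 2) *
      ((dyadicI (l+1) (2*k+1)).indicator f t - (dyadicI (l+1) (2*k)).indicator f t) := by
  have hp : (0:ℝ) < 2 ^ l := by positivity
  have h1 : (2 ^ l * t - k ∈ Set.Ico (1/2 : ℝ) 1) ↔ t ∈ dyadicI (l+1) (2*k+1) := by
    simp only [Set.mem_Ico, dyadicI]
    push_cast
    rw [pow_succ]
    constructor <;> rintro ⟨u, v⟩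
    · constructor
      · rw [div_le_iff₀ (by positivity)]; nlinarith
      · rw [lt_div_iff₀ (by positivity)]; nlinarith
    · rw [div_le_iff₀ (by positivity)] at u
      rw [lt_div_iff₀ (by positivity)] at v
      constructor <;> nlinarith
  have h2 : (2 ^ l * t - k ∈ Set.Ico (0 : ℝ) (1/2 : ℝ)) ↔ t ∈ dyadicI (l+1) (2*k) := by
    simp only [Set.mem_Ico, dyadicI]
    push_cast
    rw [pow_succ]
    constructor <;> rintro ⟨u, v⟩
    · constructor
      · rw [div_le_iff₀ (by positivity)]; nlinarith
      · rw [lt_div_iff₀ (by positivity)]; nlinarith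
    · rw [div_le_iff₀ (by positivity)] at u
      rw [lt_div_iff₀ (by positivity)] at v
      constructor <;> nlinarith
  classical
  rw [haar]
  simp only [Set.indicator_apply, Pi.one_apply, h1, h2]
  split_ifs <;> ring

lemma haar_coeff (hInt : IntegrableOn f (Set.Ico (0:ℝ) 1)) {l k : ℕ} (hk : k < 2 ^ l) :
    ∫ t in Set.Ico (0:ℝ) 1, f t * haar l k t
      = 2 ^ ((l : ℝ) / 2) *
        ((∫ t in dyadicI (l+1) (2*k+1), f t) - ∫ t in dyadicI (l+1) (2*k), f t) := by
  have hsubR : dyadicI (l+1) (2*k+1) ⊆ Set.Ico (0:ℝ) 1 := dyadicI_subset (by omega)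
  have hsubL : dyadicI (l+1) (2*k) ⊆ Set.Ico (0:ℝ) 1 := dyadicI_subset (by omega)
  have hiR : Integrable ((dyadicI (l+1) (2*k+1)).indicator f)
      (volume.restrict (Set.Ico (0:ℝ) 1)) := hInt.indicator measurableSet_Ico
  have hiL : Integrable ((dyadicI (l+1) (2*k)).indicator f)
      (volume.restrict (Set.Ico (0:ℝ) 1)) := hInt.indicator measurableSet_Ico
  simp_rw [haar_mul_eq l k]
  rw [integral_const_mul, integral_sub hiR hiL]
  rw [integral_indicator (measurableSet_dyadicI _ _), integral_indicator (measurableSet_dyadicI _ _),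
    Measure.restrict_restrict (measurableSet_dyadicI _ _),
    Measure.restrict_restrict (measurableSet_dyadicI _ _),
    Set.inter_eq_self_of_subset_left hsubR, Set.inter_eq_self_of_subset_left hsubL]
end

section
variable {α K : ℝ} {f : ℝ → ℝ}

lemma avg_close (hα : 0 < α) (hK : 0 < K)
    (Hf : ∀ x ∈ Set.Ico (0:ℝ) 1, ∀ y ∈ Set.Ico (0:ℝ) 1, |f x - f y| ≤ K * |x - y| ^ α)
    (l : ℕ) {x : ℝ} (hx : x ∈ Set.Ico (0:ℝ) 1) :
    |f x - 2 ^ l * ∫ t in dyadicI l ⌊2 ^ l * x⌋₊, f t| ≤ K * 2 ^ (-(l:ℝ) * α) := by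
  set k := ⌊2 ^ l * x⌋₊ with hkdef
  have hk : k < 2 ^ l := floor_lt_pow hx
  have hsub := dyadicI_subset (l := l) (k := k) hk
  have hxI : x ∈ dyadicI l k := mem_dyadicI_floor l hx.1
  have hI : IntegrableOn f (dyadicI l k) := (holder_integrableOn hα hK Hf).mono_set hsub
  have hp : (0:ℝ) < 2 ^ l := by positivity
  have hvol := volume_dyadicI_toReal l k
  have hpow : ((2:ℝ)^l)⁻¹ ^ α = 2 ^ (-(l:ℝ) * α) := by
    rw [← Real.rpow_natCast 2 l, ← Real.rpow_neg (by norm_num : (0:ℝ) ≤ 2),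
      ← Real.rpow_mul (by norm_num : (0:ℝ) ≤ 2)]
  have heq : f x - 2 ^ l * ∫ t in dyadicI l k, f t
      = 2 ^ l * ∫ t in dyadicI l k, (f x - f t) := by
    rw [integral_sub (integrableOn_const (C := f x) (volume_dyadicI_lt_top l k).ne) hI,
      setIntegral_const, measureReal_def, hvol, smul_eq_mul]
    field_simp
  have hb : |∫ t in dyadicI l k, (f x - f t)| ≤ (K * ((2:ℝ)^l)⁻¹ ^ α) * ((2:ℝ)^l)⁻¹ := by
    have hbd : ∀ t ∈ dyadicI l k, ‖f x - f t‖ ≤ K * ((2:ℝ)^l)⁻¹ ^ α := by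
      intro t ht
      have h1 : |f x - f t| ≤ K * |x - t| ^ α := Hf x hx t (hsub ht)
      have h2 : |x - t| ^ α ≤ ((2:ℝ)^l)⁻¹ ^ α :=
        Real.rpow_le_rpow (abs_nonneg _) (dist_le_of_mem_dyadicI hxI ht) hα.le
      rw [Real.norm_eq_abs]
      nlinarith
    have := norm_setIntegral_le_of_norm_le_const (μ := volume)
      (volume_dyadicI_lt_top l k) hbd
    rw [measureReal_def, volume_dyadicI_toReal, Real.norm_eq_abs] at this
    exact this
  rw [heq, abs_mul, abs_of_pos hp]
  calc (2:ℝ)^l * |∫ t in dyadicI l k, (f x - f t)|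
      ≤ 2^l * ((K * ((2:ℝ)^l)⁻¹ ^ α) * ((2:ℝ)^l)⁻¹) := mul_le_mul_of_nonneg_left hb hp.le
    _ = K * ((2:ℝ)^l)⁻¹ ^ α := by field_simp
    _ = K * 2 ^ (-(l:ℝ) * α) := by rw [hpow]

lemma floor_double {l : ℕ} {x : ℝ} (hx : 0 ≤ x) :
    ⌊2 ^ (l+1) * x⌋₊ = 2 * ⌊2 ^ l * x⌋₊ ∨ ⌊2 ^ (l+1) * x⌋₊ = 2 * ⌊2 ^ l * x⌋₊ + 1 := by
  set k := ⌊2 ^ l * x⌋₊ with hkdef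
  have h0 : (0:ℝ) ≤ 2 ^ l * x := mul_nonneg (by positivity) hx
  have hf1 : ((k:ℕ):ℝ) ≤ 2 ^ l * x := Nat.floor_le h0
  have hf2 : 2 ^ l * x < (k:ℝ) + 1 := Nat.lt_floor_add_one _
  have hlo : 2 * k ≤ ⌊2 ^ (l+1) * x⌋₊ := by
    apply Nat.le_floor
    push_cast
    rw [pow_succ]
    nlinarith
  have hhi : ⌊2 ^ (l+1) * x⌋₊ < 2 * k + 2 := by
    rw [Nat.floor_lt (mul_nonneg (by positivity) hx)]
    push_cast
    rw [pow_succ]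
    nlinarith
  omega

lemma integral_split {f : ℝ → ℝ} (hInt : IntegrableOn f (Set.Ico (0:ℝ) 1)) {l k : ℕ}
    (hk : k < 2 ^ l) :
    (∫ t in dyadicI l k, f t)
      = (∫ t in dyadicI (l+1) (2*k), f t) + ∫ t in dyadicI (l+1) (2*k+1), f t := by
  have hL : IntegrableOn f (dyadicI (l+1) (2*k)) := hInt.mono_set (dyadicI_subset (by omega))
  have hR : IntegrableOn f (dyadicI (l+1) (2*k+1)) := hInt.mono_set (dyadicI_subset (by omega))
  have hmid : ((2*k:ℕ):ℝ) + 1 = ((2*k+1:ℕ):ℝ) := by push_cast; ring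
  have hdisj : Disjoint (dyadicI (l+1) (2*k)) (dyadicI (l+1) (2*k+1)) := by
    rw [dyadicI, dyadicI, hmid]
    exact Set.Ico_disjoint_Ico_same
  have hset : dyadicI l k = dyadicI (l+1) (2*k) ∪ dyadicI (l+1) (2*k+1) := by
    rw [dyadicI, dyadicI, dyadicI, hmid]
    have m1 : ((2*k:ℕ):ℝ) / 2^(l+1) = (k:ℝ)/2^l := by
      push_cast; rw [pow_succ]; field_simp
    have m3 : (((2*k+1:ℕ):ℝ)+1) / 2^(l+1) = ((k:ℝ)+1)/2^l := by
      push_cast; rw [pow_succ]; field_simp; ring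
    rw [m1, m3, Set.Ico_union_Ico_eq_Ico]
    · rw [pow_succ, div_le_div_iff₀ (by positivity) (by positivity)]
      push_cast
      nlinarith [pow_pos (by norm_num : (0:ℝ) < 2) l]
    · rw [pow_succ, div_le_div_iff₀ (by positivity) (by positivity)]
      push_cast
      nlinarith [pow_pos (by norm_num : (0:ℝ) < 2) l]
  rw [hset, setIntegral_union hdisj (measurableSet_dyadicI _ _) hL hR]

lemma avg_step (hα : 0 < α) (hK : 0 < K)
    (Hf : ∀ x ∈ Set.Ico (0:ℝ) 1, ∀ y ∈ Set.Ico (0:ℝ) 1, |f x - f y| ≤ K * |x - y| ^ α)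
    (l : ℕ) {x : ℝ} (hx : x ∈ Set.Ico (0:ℝ) 1) :
    |(2:ℝ) ^ (l+1) * (∫ t in dyadicI (l+1) ⌊2 ^ (l+1) * x⌋₊, f t)
        - 2 ^ l * ∫ t in dyadicI l ⌊2 ^ l * x⌋₊, f t|
      ≤ 2 ^ ((l:ℝ)/2) * |∫ t in Set.Ico (0:ℝ) 1, f t * haar l ⌊2 ^ l * x⌋₊ t| := by
  have hInt := holder_integrableOn hα hK Hf
  set k := ⌊2 ^ l * x⌋₊ with hkdef
  have hkl : k < 2 ^ l := floor_lt_pow hx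
  have hc := haar_coeff hInt hkl
  have hsplit := integral_split hInt hkl
  have h2l : (2:ℝ) ^ ((l:ℝ)/2) * 2 ^ ((l:ℝ)/2) = 2 ^ l := by
    rw [← Real.rpow_add (by norm_num : (0:ℝ) < 2),
      show (l:ℝ)/2 + (l:ℝ)/2 = (l:ℝ) by ring]
    exact Real.rpow_natCast 2 l
  have hrp : (0:ℝ) < 2 ^ ((l:ℝ)/2) := Real.rpow_pos_of_pos (by norm_num) _
  rw [hc, abs_mul, abs_of_pos hrp, ← mul_assoc, h2l]
  rcases floor_double (l := l) hx.1 with h | h <;> rw [h] <;> rw [hsplit]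
  · rw [show (2:ℝ)^(l+1) * (∫ t in dyadicI (l+1) (2*k), f t)
          - 2^l * ((∫ t in dyadicI (l+1) (2*k), f t) + ∫ t in dyadicI (l+1) (2*k+1), f t)
        = -((2:ℝ)^l * ((∫ t in dyadicI (l+1) (2*k+1), f t) - ∫ t in dyadicI (l+1) (2*k), f t))
        by rw [pow_succ]; ring]
    rw [abs_neg, abs_mul, abs_of_pos (by positivity : (0:ℝ) < 2^l)]
  · rw [show (2:ℝ)^(l+1) * (∫ t in dyadicI (l+1) (2*k+1), f t)
          - 2^l * ((∫ t in dyadicI (l+1) (2*k), f t) + ∫ t in dyadicI (l+1) (2*k+1), f t)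
        = (2:ℝ)^l * ((∫ t in dyadicI (l+1) (2*k+1), f t) - ∫ t in dyadicI (l+1) (2*k), f t)
        by rw [pow_succ]; ring]
    rw [abs_mul, abs_of_pos (by positivity : (0:ℝ) < 2^l)]

lemma coeff_bound (hα : 0 < α) (hK : 0 < K)
    (Hf : ∀ x ∈ Set.Ico (0:ℝ) 1, ∀ y ∈ Set.Ico (0:ℝ) 1, |f x - f y| ≤ K * |x - y| ^ α)
    {l k : ℕ} (hk : k < 2 ^ l) :
    |∫ t in Set.Ico (0:ℝ) 1, f t * haar l k t| ≤ |f 0| + K := by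
  have hInt := holder_integrableOn hα hK Hf
  rw [haar_coeff hInt hk]
  have hb : ∀ m : ℕ, m < 2^(l+1) →
      |∫ t in dyadicI (l+1) m, f t| ≤ (|f 0| + K) * ((2:ℝ)^(l+1))⁻¹ := by
    intro m hm
    have := norm_setIntegral_le_of_norm_le_const (μ := volume) (C := |f 0| + K)
      (volume_dyadicI_lt_top (l+1) m)
      (fun t ht => by
        rw [Real.norm_eq_abs]
        exact holder_bounded hα hK Hf (dyadicI_subset hm ht))
    rw [measureReal_def, volume_dyadicI_toReal, Real.norm_eq_abs] at this
    exact this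
  have hR := hb (2*k+1) (by omega)
  have hL := hb (2*k) (by omega)
  have hrp : (0:ℝ) < 2 ^ ((l:ℝ)/2) := Real.rpow_pos_of_pos (by norm_num) _
  have h1 : (2:ℝ) ^ ((l:ℝ)/2) ≤ (2:ℝ)^l := by
    rw [← Real.rpow_natCast 2 l]
    apply Real.rpow_le_rpow_of_exponent_le (by norm_num)
    have : (0:ℝ) ≤ (l:ℝ) := Nat.cast_nonneg l
    linarith
  have hB0 : (0:ℝ) ≤ |f 0| + K := by positivity
  calc |2 ^ ((l:ℝ)/2) * ((∫ t in dyadicI (l+1) (2*k+1), f t) - ∫ t in dyadicI (l+1) (2*k), f t)|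
      = 2 ^ ((l:ℝ)/2) *
        |(∫ t in dyadicI (l+1) (2*k+1), f t) - ∫ t in dyadicI (l+1) (2*k), f t| := by
        rw [abs_mul, abs_of_pos hrp]
    _ ≤ 2 ^ ((l:ℝ)/2) * (2 * ((|f 0| + K) * ((2:ℝ)^(l+1))⁻¹)) := by
        apply mul_le_mul_of_nonneg_left _ hrp.le
        calc |(∫ t in dyadicI (l+1) (2*k+1), f t) - ∫ t in dyadicI (l+1) (2*k), f t|
            ≤ |∫ t in dyadicI (l+1) (2*k+1), f t| + |∫ t in dyadicI (l+1) (2*k), f t| :=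
              abs_sub _ _
          _ ≤ 2 * ((|f 0| + K) * ((2:ℝ)^(l+1))⁻¹) := by linarith
    _ ≤ (2:ℝ)^l * (2 * ((|f 0| + K) * ((2:ℝ)^(l+1))⁻¹)) :=
        mul_le_mul_of_nonneg_right h1 (by positivity)
    _ = |f 0| + K := by rw [pow_succ]; field_simp

end

/-- Let `0 < α ≤ 1`, `K > 0`, `η > 0`. There is `C > 0`, depending only on
`α, K, η`, such that: for every `j₀` and every self-similar `f ∈ Σ(α,K)` (i.e. for all
`j ≥ j₀`, `sup_{x ∈ [0,1)} |f(x) - 2^j ∫_{I_{j,⌊2^j x⌋}} f| ≥ η 2^{-jα}`), one has for all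
`j ≥ j₀` that `sup_{(l,k), l ≥ j, k < 2^l} |∫₀¹ f ψ_{l,k}| ≥ C 2^{-j(α+1/2)}`. -/
theorem stmt_7 (α K η : ℝ) (hα : 0 < α) (hα1 : α ≤ 1) (hK : 0 < K) (hη : 0 < η) :
    ∃ C > 0, ∀ (j₀ : ℕ) (f : ℝ → ℝ),
      (∀ x ∈ Set.Ico (0 : ℝ) 1, ∀ y ∈ Set.Ico (0 : ℝ) 1, |f x - f y| ≤ K * |x - y| ^ α) →
      (∀ j : ℕ, j₀ ≤ j →
        η * 2 ^ (-(j : ℝ) * α) ≤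
          ⨆ x : Set.Ico (0 : ℝ) 1,
            |f x - 2 ^ j * ∫ t in dyadicI j ⌊2 ^ j * (x : ℝ)⌋₊, f t|) →
      ∀ j : ℕ, j₀ ≤ j →
        C * 2 ^ (-(j : ℝ) * (α + 1 / 2)) ≤
          ⨆ (l : ℕ) (_ : j ≤ l) (k : Fin (2 ^ l)),
            |∫ t in Set.Ico (0 : ℝ) 1, f t * haar l (k : ℕ) t| := by
  have h2a : (2:ℝ) ^ (-α) < 1 :=
    Real.rpow_lt_one_of_one_lt_of_neg (by norm_num) (neg_lt_zero.2 hα)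
  have h2a0 : (0:ℝ) ≤ (2:ℝ) ^ (-α) := (Real.rpow_pos_of_pos (by norm_num) _).le
  obtain ⟨m, hm⟩ := exists_pow_lt_of_lt_one (show (0:ℝ) < η / (2*K) by positivity) h2a
  set M : ℕ := m + 1 with hMdef
  have hMpos : (0:ℝ) < (M:ℝ) := by positivity
  have hZ : (0:ℝ) < 2 ^ ((M:ℝ)/2) := Real.rpow_pos_of_pos (by norm_num) _
  have hMα : K * (2:ℝ) ^ (-(M:ℝ) * α) ≤ η / 2 := by
    have e : (2:ℝ) ^ (-(M:ℝ) * α) = ((2:ℝ) ^ (-α)) ^ M := by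
      rw [← Real.rpow_natCast ((2:ℝ) ^ (-α)) M,
        ← Real.rpow_mul (by norm_num : (0:ℝ) ≤ 2)]
      congr 1; ring
    rw [e, hMdef, pow_succ]
    have h1 : ((2:ℝ)^(-α))^m * ((2:ℝ)^(-α)) ≤ ((2:ℝ)^(-α))^m * 1 :=
      mul_le_mul_of_nonneg_left h2a.le (pow_nonneg h2a0 m)
    have h2 : ((2:ℝ)^(-α))^m ≤ η / (2*K) := hm.le
    calc K * (((2:ℝ)^(-α))^m * ((2:ℝ)^(-α))) ≤ K * (((2:ℝ)^(-α))^m * 1) :=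
          mul_le_mul_of_nonneg_left h1 hK.le
      _ ≤ K * (η / (2*K)) := by
          apply mul_le_mul_of_nonneg_left _ hK.le
          rw [mul_one]; exact h2
      _ = η / 2 := by field_simp
  refine ⟨η / (2 * (M:ℝ) * 2 ^ ((M:ℝ)/2)), by positivity, ?_⟩
  intro j₀ f Hf Hself j hj
  have hInt := holder_integrableOn hα hK Hf
  set S := ⨆ (l : ℕ) (_ : j ≤ l) (k : Fin (2 ^ l)),
      |∫ t in Set.Ico (0 : ℝ) 1, f t * haar l (k : ℕ) t| with hSdef
  have hgB : ∀ l : ℕ,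
      (⨆ (_ : j ≤ l) (k : Fin (2^l)),
        |∫ t in Set.Ico (0:ℝ) 1, f t * haar l (k:ℕ) t|) ≤ |f 0| + K := by
    intro l
    by_cases h : j ≤ l
    · haveI : Nonempty (Fin (2^l)) := ⟨⟨0, by positivity⟩⟩
      rw [ciSup_pos h]
      exact ciSup_le fun k => coeff_bound hα hK Hf k.isLt
    · haveI : IsEmpty (j ≤ l) := isEmpty_Prop.mpr h
      rw [Real.iSup_of_isEmpty]
      positivity
  have hSle : ∀ l : ℕ, j ≤ l → ∀ k : Fin (2^l),
      |∫ t in Set.Ico (0:ℝ) 1, f t * haar l (k:ℕ) t| ≤ S := by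
    intro l hl k
    haveI : Nonempty (Fin (2^l)) := ⟨⟨0, by positivity⟩⟩
    have h1 : |∫ t in Set.Ico (0:ℝ) 1, f t * haar l (k:ℕ) t|
        ≤ ⨆ k : Fin (2^l), |∫ t in Set.Ico (0:ℝ) 1, f t * haar l (k:ℕ) t| :=
      le_ciSup (f := fun k : Fin (2^l) =>
        |∫ t in Set.Ico (0:ℝ) 1, f t * haar l (k:ℕ) t|)
        ((Set.finite_range _).bddAbove) k
    have h2 : (⨆ k : Fin (2^l), |∫ t in Set.Ico (0:ℝ) 1, f t * haar l (k:ℕ) t|)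
        = ⨆ (_ : j ≤ l) (k : Fin (2^l)),
            |∫ t in Set.Ico (0:ℝ) 1, f t * haar l (k:ℕ) t| :=
      (ciSup_pos (f := fun _ : j ≤ l => ⨆ k : Fin (2^l),
        |∫ t in Set.Ico (0:ℝ) 1, f t * haar l (k:ℕ) t|) hl).symm
    have h3 : (⨆ (_ : j ≤ l) (k : Fin (2^l)),
        |∫ t in Set.Ico (0:ℝ) 1, f t * haar l (k:ℕ) t|) ≤ S := by
      rw [hSdef]
      exact le_ciSup (f := fun l : ℕ => ⨆ (_ : j ≤ l) (k : Fin (2^l)),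
          |∫ t in Set.Ico (0:ℝ) 1, f t * haar l (k:ℕ) t|)
        ⟨|f 0| + K, by rintro y ⟨l', rfl⟩; exact hgB l'⟩ l
    rw [h2] at h1
    exact le_trans h1 h3
  have hS0 : 0 ≤ S :=
    le_trans (abs_nonneg _) (hSle j le_rfl ⟨0, by positivity⟩)
  have tele : ∀ x : ℝ, x ∈ Set.Ico (0:ℝ) 1 → ∀ n : ℕ,
      |f x - 2 ^ j * ∫ t in dyadicI j ⌊2 ^ j * x⌋₊, f t|
        ≤ |f x - 2 ^ (j+n) * ∫ t in dyadicI (j+n) ⌊2 ^ (j+n) * x⌋₊, f t|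
          + ∑ i ∈ Finset.range n, 2 ^ (((j+i:ℕ):ℝ)/2) *
              |∫ t in Set.Ico (0:ℝ) 1, f t * haar (j+i) ⌊2 ^ (j+i) * x⌋₊ t| := by
    intro x hx n
    induction n with
    | zero => simp
    | succ n ih =>
      have hstep := avg_step hα hK Hf (j+n) hx
      have tri := abs_sub_le (f x)
        ((2:ℝ) ^ (j+n+1) * ∫ t in dyadicI (j+n+1) ⌊2 ^ (j+n+1) * x⌋₊, f t)
        ((2:ℝ) ^ (j+n) * ∫ t in dyadicI (j+n) ⌊2 ^ (j+n) * x⌋₊, f t)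
      rw [Finset.sum_range_succ, show j + (n+1) = j + n + 1 from rfl]
      linarith [ih, tri, hstep]
  have key : ∀ x : Set.Ico (0:ℝ) 1,
      |f x - 2 ^ j * ∫ t in dyadicI j ⌊2 ^ j * (x:ℝ)⌋₊, f t|
        ≤ η/2 * 2 ^ (-(j:ℝ)*α) + (M:ℝ) * (2 ^ (((j:ℝ)+(M:ℝ))/2) * S) := by
    rintro ⟨x, hx⟩
    have h1 := tele x hx M
    have h2 := avg_close hα hK Hf (j+M) hx
    have h3 : K * (2:ℝ) ^ (-((j+M:ℕ):ℝ) * α) ≤ η/2 * 2 ^ (-(j:ℝ)*α) := by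
      have e : (2:ℝ) ^ (-((j+M:ℕ):ℝ) * α) = 2 ^ (-(j:ℝ)*α) * 2 ^ (-(M:ℝ)*α) := by
        rw [← Real.rpow_add (by norm_num : (0:ℝ) < 2)]
        congr 1; push_cast; ring
      rw [e]
      calc K * ((2:ℝ)^(-(j:ℝ)*α) * 2^(-(M:ℝ)*α))
          = (K * 2^(-(M:ℝ)*α)) * 2^(-(j:ℝ)*α) := by ring
        _ ≤ (η/2) * 2^(-(j:ℝ)*α) :=
            mul_le_mul_of_nonneg_right hMα (Real.rpow_nonneg (by norm_num) _)
    have h4 : ∑ i ∈ Finset.range M, 2 ^ (((j+i:ℕ):ℝ)/2) *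
          |∫ t in Set.Ico (0:ℝ) 1, f t * haar (j+i) ⌊2 ^ (j+i) * x⌋₊ t|
        ≤ (M:ℝ) * (2 ^ (((j:ℝ)+(M:ℝ))/2) * S) := by
      have hterm : ∀ i ∈ Finset.range M, 2 ^ (((j+i:ℕ):ℝ)/2) *
            |∫ t in Set.Ico (0:ℝ) 1, f t * haar (j+i) ⌊2 ^ (j+i) * x⌋₊ t|
          ≤ 2 ^ (((j:ℝ)+(M:ℝ))/2) * S := by
        intro i hi
        have hfl : ⌊2 ^ (j+i) * x⌋₊ < 2 ^ (j+i) := floor_lt_pow hx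
        have hcS : |∫ t in Set.Ico (0:ℝ) 1, f t * haar (j+i) ⌊2 ^ (j+i) * x⌋₊ t| ≤ S := by
          simpa using hSle (j+i) (Nat.le_add_right j i) ⟨_, hfl⟩
        have hexp : (2:ℝ) ^ (((j+i:ℕ):ℝ)/2) ≤ 2 ^ (((j:ℝ)+(M:ℝ))/2) := by
          apply Real.rpow_le_rpow_of_exponent_le (by norm_num)
          have hiM : (i:ℝ) ≤ (M:ℝ) := by
            exact_mod_cast (Finset.mem_range.1 hi).le
          have hji : ((j+i:ℕ):ℝ) = (j:ℝ) + (i:ℝ) := by push_cast; ring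
          rw [hji]
          linarith
        exact mul_le_mul hexp hcS (abs_nonneg _) (Real.rpow_nonneg (by norm_num) _)
      calc ∑ i ∈ Finset.range M, 2 ^ (((j+i:ℕ):ℝ)/2) *
            |∫ t in Set.Ico (0:ℝ) 1, f t * haar (j+i) ⌊2 ^ (j+i) * x⌋₊ t|
          ≤ ∑ _i ∈ Finset.range M, 2 ^ (((j:ℝ)+(M:ℝ))/2) * S := Finset.sum_le_sum hterm
        _ = (M:ℝ) * (2 ^ (((j:ℝ)+(M:ℝ))/2) * S) := by
            rw [Finset.sum_const, Finset.card_range, nsmul_eq_mul]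
    have h23 : |f x - 2 ^ (j+M) * ∫ t in dyadicI (j+M) ⌊2 ^ (j+M) * x⌋₊, f t|
        ≤ η/2 * 2 ^ (-(j:ℝ)*α) := le_trans h2 h3
    linarith [h1, h23, h4]
  haveI : Nonempty (Set.Ico (0:ℝ) 1) := ⟨⟨0, by norm_num⟩⟩
  have hsup : η * 2 ^ (-(j:ℝ)*α)
      ≤ η/2 * 2 ^ (-(j:ℝ)*α) + (M:ℝ) * (2 ^ (((j:ℝ)+(M:ℝ))/2) * S) :=
    le_trans (Hself j hj) (ciSup_le key)
  have hrp : (0:ℝ) < 2 ^ (-(j:ℝ)*α) := Real.rpow_pos_of_pos (by norm_num) _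
  have h5 : η/2 * 2 ^ (-(j:ℝ)*α) ≤ (M:ℝ) * 2 ^ (((j:ℝ)+(M:ℝ))/2) * S := by
    nlinarith [hsup, hrp]
  have hD : (0:ℝ) < (M:ℝ) * 2 ^ (((j:ℝ)+(M:ℝ))/2) :=
    mul_pos hMpos (Real.rpow_pos_of_pos (by norm_num) _)
  apply le_of_mul_le_mul_right _ hD
  have e1 : (2:ℝ)^(-(j:ℝ)*(α+1/2)) * 2^(((j:ℝ)+(M:ℝ))/2) = 2^(-(j:ℝ)*α) * 2^((M:ℝ)/2) := by
    rw [← Real.rpow_add (by norm_num : (0:ℝ) < 2), ← Real.rpow_add (by norm_num : (0:ℝ) < 2)]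
    congr 1; ring
  have hident : (η / (2 * (M:ℝ) * 2 ^ ((M:ℝ)/2))) * 2 ^ (-(j:ℝ)*(α+1/2))
      * ((M:ℝ) * 2 ^ (((j:ℝ)+(M:ℝ))/2)) = η/2 * 2 ^ (-(j:ℝ)*α) := by
    rw [show (η / (2 * (M:ℝ) * 2 ^ ((M:ℝ)/2))) * 2 ^ (-(j:ℝ)*(α+1/2))
          * ((M:ℝ) * 2 ^ (((j:ℝ)+(M:ℝ))/2))
        = (2 ^ (-(j:ℝ)*(α+1/2)) * 2 ^ (((j:ℝ)+(M:ℝ))/2))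
          * ((η / (2 * (M:ℝ) * 2 ^ ((M:ℝ)/2))) * (M:ℝ)) from by ring, e1]
    field_simp
  rw [hident]
  calc η/2 * 2^(-(j:ℝ)*α) ≤ (M:ℝ) * 2^(((j:ℝ)+(M:ℝ))/2) * S := h5
    _ = S * ((M:ℝ) * 2^(((j:ℝ)+(M:ℝ))/2)) := by ring
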